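/- For all real y, z, z', w, w' (avoiding the poles), the following trigonometric identity holds: sin(πy)·sin(π(z+w))·sin(π(z'+w))·sin(π(z+w'))·sin(π(z'+w')) / (sin(π(y−z))·sin(π(y−z'))·sin(π(y+w))·sin(π(y+w'))) = sin(π(z'+w))sin(π(z'+w'))sin(πz)/(sin(π(z−z'))sin(π(y−z))) + sin(π(z+w))sin(π(z+w'))sin(πz')/(sin(π(z'−z))sin(π(y−z'))) + sin(π(z+w'))sin(π(z'+w'))sin(πw)/(sin(π(w−w'))sin(π(y+w))) + sin(π(z+w))sin(π(z'+w))sin(πw')/(sin(π(w'−w))sin(π(y+w'))). -/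

import Mathlib

open Real

set_option maxHeartbeats 4000000 in
lemma key (k a b c d e : ℂ) (hk : k ≠ 0) (ha : a ≠ 0) (hb : b ≠ 0) (hc : c ≠ 0)
    (hd : d ≠ 0) (he : e ≠ 0)
    (hab : a^2 - b^2 ≠ 0) (hac : a^2 - c^2 ≠ 0)
    (had : a^2*d^2 - 1 ≠ 0) (hae : a^2*e^2 - 1 ≠ 0)
    (hbc : b^2 - c^2 ≠ 0) (hde : d^2 - e^2 ≠ 0) :
    ((a^2-1)/(k*a)) * ((b^2*d^2-1)/(k*(b*d))) * ((c^2*d^2-1)/(k*(c*d))) *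
        ((b^2*e^2-1)/(k*(b*e))) * ((c^2*e^2-1)/(k*(c*e))) /
      ( ((a^2-b^2)/(k*(a*b))) * ((a^2-c^2)/(k*(a*c))) * ((a^2*d^2-1)/(k*(a*d))) *
        ((a^2*e^2-1)/(k*(a*e))) )
    = ((c^2*d^2-1)/(k*(c*d))) * ((c^2*e^2-1)/(k*(c*e))) * ((b^2-1)/(k*b)) /
        ( ((b^2-c^2)/(k*(b*c))) * ((a^2-b^2)/(k*(a*b))) )
      + ((b^2*d^2-1)/(k*(b*d))) * ((b^2*e^2-1)/(k*(b*e))) * ((c^2-1)/(k*c)) /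
        ( ((c^2-b^2)/(k*(b*c))) * ((a^2-c^2)/(k*(a*c))) )
      + ((b^2*e^2-1)/(k*(b*e))) * ((c^2*e^2-1)/(k*(c*e))) * ((d^2-1)/(k*d)) /
        ( ((d^2-e^2)/(k*(d*e))) * ((a^2*d^2-1)/(k*(a*d))) )
      + ((b^2*d^2-1)/(k*(b*d))) * ((c^2*d^2-1)/(k*(c*d))) * ((e^2-1)/(k*e)) /
        ( ((e^2-d^2)/(k*(d*e))) * ((a^2*e^2-1)/(k*(a*e))) ) := by
  have hcb : c^2 - b^2 ≠ 0 := fun h => hbc (by linear_combination -h)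
  have hed : e^2 - d^2 ≠ 0 := fun h => hde (by linear_combination -h)
  set D : ℂ := k*(b*c*d*e)*(a^2-b^2)*(a^2-c^2)*(a^2*d^2-1)*(a^2*e^2-1)*(b^2-c^2)*(d^2-e^2) with hDdef
  have hD : D ≠ 0 := by
    rw [hDdef]; (repeat' apply mul_ne_zero) <;> assumption
  have t0 : ((a^2-1)/(k*a)) * ((b^2*d^2-1)/(k*(b*d))) * ((c^2*d^2-1)/(k*(c*d))) *
        ((b^2*e^2-1)/(k*(b*e))) * ((c^2*e^2-1)/(k*(c*e))) /
      ( ((a^2-b^2)/(k*(a*b))) * ((a^2-c^2)/(k*(a*c))) * ((a^2*d^2-1)/(k*(a*d))) *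
        ((a^2*e^2-1)/(k*(a*e))) )
      = ((a^2-1)*(b^2*d^2-1)*(c^2*d^2-1)*(b^2*e^2-1)*(c^2*e^2-1)*a^3*(b^2-c^2)*(d^2-e^2)) / D := by
    rw [div_mul_div_comm, div_mul_div_comm, div_mul_div_comm, div_mul_div_comm,
      div_mul_div_comm, div_mul_div_comm, div_mul_div_comm, div_div_div_eq,
      div_eq_div_iff (by (repeat' apply mul_ne_zero) <;> assumption) hD]
    ring
  have t1 : ((c^2*d^2-1)/(k*(c*d))) * ((c^2*e^2-1)/(k*(c*e))) * ((b^2-1)/(k*b)) /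
        ( ((b^2-c^2)/(k*(b*c))) * ((a^2-b^2)/(k*(a*b))) )
      = ((c^2*d^2-1)*(c^2*e^2-1)*(b^2-1)*a*b^2*(a^2-c^2)*(a^2*d^2-1)*(a^2*e^2-1)*(d^2-e^2)) / D := by
    rw [div_mul_div_comm, div_mul_div_comm, div_mul_div_comm, div_div_div_eq,
      div_eq_div_iff (by (repeat' apply mul_ne_zero) <;> assumption) hD]
    ring
  have t2 : ((b^2*d^2-1)/(k*(b*d))) * ((b^2*e^2-1)/(k*(b*e))) * ((c^2-1)/(k*c)) /
        ( ((c^2-b^2)/(k*(b*c))) * ((a^2-c^2)/(k*(a*c))) )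
      = (-((b^2*d^2-1)*(b^2*e^2-1)*(c^2-1)*a*c^2*(a^2-b^2)*(a^2*d^2-1)*(a^2*e^2-1)*(d^2-e^2))) / D := by
    rw [div_mul_div_comm, div_mul_div_comm, div_mul_div_comm, div_div_div_eq,
      div_eq_div_iff (by (repeat' apply mul_ne_zero) <;> assumption) hD]
    ring
  have t3 : ((b^2*e^2-1)/(k*(b*e))) * ((c^2*e^2-1)/(k*(c*e))) * ((d^2-1)/(k*d)) /
        ( ((d^2-e^2)/(k*(d*e))) * ((a^2*d^2-1)/(k*(a*d))) )
      = ((b^2*e^2-1)*(c^2*e^2-1)*(d^2-1)*a*d^2*(a^2-b^2)*(a^2-c^2)*(a^2*e^2-1)*(b^2-c^2)) / D := by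
    rw [div_mul_div_comm, div_mul_div_comm, div_mul_div_comm, div_div_div_eq,
      div_eq_div_iff (by (repeat' apply mul_ne_zero) <;> assumption) hD]
    ring
  have t4 : ((b^2*d^2-1)/(k*(b*d))) * ((c^2*d^2-1)/(k*(c*d))) * ((e^2-1)/(k*e)) /
        ( ((e^2-d^2)/(k*(d*e))) * ((a^2*e^2-1)/(k*(a*e))) )
      = (-((b^2*d^2-1)*(c^2*d^2-1)*(e^2-1)*a*e^2*(a^2-b^2)*(a^2-c^2)*(a^2*d^2-1)*(b^2-c^2))) / D := by
    rw [div_mul_div_comm, div_mul_div_comm, div_mul_div_comm, div_div_div_eq,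
      div_eq_div_iff (by (repeat' apply mul_ne_zero) <;> assumption) hD]
    ring
  rw [t0, t1, t2, t3, t4, ← add_div, ← add_div, ← add_div]
  congr 1
  ring

lemma sin1 (s : ℝ) : ((Real.sin (π*s) : ℝ) : ℂ)
    = ((Complex.exp ((π:ℂ)*(s:ℂ)*Complex.I))^2 - 1) /
      ((2*Complex.I)*(Complex.exp ((π:ℂ)*(s:ℂ)*Complex.I))) := by
  rw [Complex.ofReal_sin]
  rw [show ((π*s : ℝ) : ℂ) = (π:ℂ)*(s:ℂ) by push_cast; ring]
  rw [Complex.sin]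
  rw [show (-((π:ℂ)*(s:ℂ)) * Complex.I) = -((π:ℂ)*(s:ℂ)*Complex.I) by ring, Complex.exp_neg]
  have h := Complex.exp_ne_zero ((π:ℂ)*(s:ℂ)*Complex.I)
  have hI : (Complex.I : ℂ) ≠ 0 := Complex.I_ne_zero
  field_simp
  linear_combination (1 - (Complex.exp ((π:ℂ)*(s:ℂ)*Complex.I))^2) * Complex.I_sq

lemma sinadd (s t : ℝ) : ((Real.sin (π*(s+t)) : ℝ) : ℂ)
    = ((Complex.exp ((π:ℂ)*(s:ℂ)*Complex.I))^2 * (Complex.exp ((π:ℂ)*(t:ℂ)*Complex.I))^2 - 1) /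
      ((2*Complex.I)*(Complex.exp ((π:ℂ)*(s:ℂ)*Complex.I) * Complex.exp ((π:ℂ)*(t:ℂ)*Complex.I))) := by
  rw [sin1 (s+t)]
  rw [show ((π:ℂ)*((s+t : ℝ):ℂ)*Complex.I) = (π:ℂ)*(s:ℂ)*Complex.I + (π:ℂ)*(t:ℂ)*Complex.I by push_cast; ring]
  rw [Complex.exp_add]
  ring

lemma sinsub (s t : ℝ) : ((Real.sin (π*(s-t)) : ℝ) : ℂ)
    = ((Complex.exp ((π:ℂ)*(s:ℂ)*Complex.I))^2 - (Complex.exp ((π:ℂ)*(t:ℂ)*Complex.I))^2) /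
      ((2*Complex.I)*(Complex.exp ((π:ℂ)*(s:ℂ)*Complex.I) * Complex.exp ((π:ℂ)*(t:ℂ)*Complex.I))) := by
  rw [sin1 (s-t)]
  rw [show ((π:ℂ)*((s-t : ℝ):ℂ)*Complex.I) = (π:ℂ)*(s:ℂ)*Complex.I - (π:ℂ)*(t:ℂ)*Complex.I by push_cast; ring]
  rw [Complex.exp_sub]
  have hs := Complex.exp_ne_zero ((π:ℂ)*(s:ℂ)*Complex.I)
  have ht := Complex.exp_ne_zero ((π:ℂ)*(t:ℂ)*Complex.I)
  have hI : (Complex.I : ℂ) ≠ 0 := Complex.I_ne_zero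
  field_simp

set_option maxHeartbeats 4000000 in
/-- The trigonometric identity used in the proof of Lemma 8.4. -/
theorem stmt_13 (y z z' w w' : ℝ)
    (h1 : Real.sin (π * (y - z)) ≠ 0) (h2 : Real.sin (π * (y - z')) ≠ 0)
    (h3 : Real.sin (π * (y + w)) ≠ 0) (h4 : Real.sin (π * (y + w')) ≠ 0)
    (h5 : Real.sin (π * (z - z')) ≠ 0) (h6 : Real.sin (π * (w - w')) ≠ 0) :
    Real.sin (π * y) * Real.sin (π * (z + w)) * Real.sin (π * (z' + w)) *
        Real.sin (π * (z + w')) * Real.sin (π * (z' + w')) /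
      (Real.sin (π * (y - z)) * Real.sin (π * (y - z')) *
        Real.sin (π * (y + w)) * Real.sin (π * (y + w')))
    = Real.sin (π * (z' + w)) * Real.sin (π * (z' + w')) * Real.sin (π * z) /
        (Real.sin (π * (z - z')) * Real.sin (π * (y - z)))
      + Real.sin (π * (z + w)) * Real.sin (π * (z + w')) * Real.sin (π * z') /
        (Real.sin (π * (z' - z)) * Real.sin (π * (y - z')))
      + Real.sin (π * (z + w')) * Real.sin (π * (z' + w')) * Real.sin (π * w) /
        (Real.sin (π * (w - w')) * Real.sin (π * (y + w)))
      + Real.sin (π * (z + w)) * Real.sin (π * (z' + w)) * Real.sin (π * w') /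
        (Real.sin (π * (w' - w)) * Real.sin (π * (y + w'))) := by
  set A := Complex.exp ((π:ℂ)*(y:ℂ)*Complex.I) with hA
  set B := Complex.exp ((π:ℂ)*(z:ℂ)*Complex.I) with hB
  set C := Complex.exp ((π:ℂ)*(z':ℂ)*Complex.I) with hC
  set Dv := Complex.exp ((π:ℂ)*(w:ℂ)*Complex.I) with hDv
  set E := Complex.exp ((π:ℂ)*(w':ℂ)*Complex.I) with hE
  have hk : (2*Complex.I : ℂ) ≠ 0 := by simp [Complex.I_ne_zero]
  have hA0 : A ≠ 0 := Complex.exp_ne_zero _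
  have hB0 : B ≠ 0 := Complex.exp_ne_zero _
  have hC0 : C ≠ 0 := Complex.exp_ne_zero _
  have hD0 : Dv ≠ 0 := Complex.exp_ne_zero _
  have hE0 : E ≠ 0 := Complex.exp_ne_zero _
  have hab : A^2 - B^2 ≠ 0 := by
    intro h
    apply h1
    rw [← Complex.ofReal_eq_zero, sinsub y z, ← hA, ← hB, h, zero_div]
  have hac : A^2 - C^2 ≠ 0 := by
    intro h
    apply h2
    rw [← Complex.ofReal_eq_zero, sinsub y z', ← hA, ← hC, h, zero_div]
  have had : A^2*Dv^2 - 1 ≠ 0 := by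
    intro h
    apply h3
    rw [← Complex.ofReal_eq_zero, sinadd y w, ← hA, ← hDv, h, zero_div]
  have hae : A^2*E^2 - 1 ≠ 0 := by
    intro h
    apply h4
    rw [← Complex.ofReal_eq_zero, sinadd y w', ← hA, ← hE, h, zero_div]
  have hbc : B^2 - C^2 ≠ 0 := by
    intro h
    apply h5
    rw [← Complex.ofReal_eq_zero, sinsub z z', ← hB, ← hC, h, zero_div]
  have hde : Dv^2 - E^2 ≠ 0 := by
    intro h
    apply h6
    rw [← Complex.ofReal_eq_zero, sinsub w w', ← hDv, ← hE, h, zero_div]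
  rw [← Complex.ofReal_inj]
  simp only [Complex.ofReal_div, Complex.ofReal_mul, Complex.ofReal_add]
  rw [sin1 y, sin1 z, sin1 z', sin1 w, sin1 w', sinadd z w, sinadd z' w, sinadd z w',
    sinadd z' w', sinadd y w, sinadd y w', sinsub y z, sinsub y z', sinsub z z',
    sinsub w w', sinsub z' z, sinsub w' w, ← hA, ← hB, ← hC, ← hDv, ← hE,
    mul_comm C B, mul_comm E Dv]
  exact key (2*Complex.I) A B C Dv E hk hA0 hB0 hC0 hD0 hE0 hab hac had hae hbc hde
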